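/- Let A be a full subcategory of C_fin, F an object of C universal and locally finite for A, A an object of A, and t ≥ 2. The condition 'F → (B)^A_{<ω,t} for all B in A with A → B' is equivalent to: for every such B there is a coloring λ : hom(A,B) → t which is essential at B, meaning that for every coloring χ : hom(A,F) → k there is w ∈ hom(B,F) with ker λ ⊆ ker χ^{(w)}, where χ^{(w)}(f) = χ(w∘f). -/

import Mathlib

open CategoryTheory

universe v u v' u'

def RamseyArrow (C : Type u) [Category.{v} C] (A B Z : C) (k t : ℕ) : Prop :=
  ∀ χ : (A ⟶ Z) → Fin k, ∃ w : B ⟶ Z,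
    (Set.range fun f : A ⟶ B => χ (f ≫ w)).ncard ≤ t

noncomputable def ramseyDeg (C : Type u) [Category.{v} C] (A : C) : ℕ∞ :=
  sInf {n : ℕ∞ | ∃ m : ℕ, n = (m : ℕ∞) ∧ 1 ≤ m ∧
    ∀ k : ℕ, 2 ≤ k → ∀ B : C, ∃ Z : C, RamseyArrow C A B Z k m}

def SatisfiesC (C : Type u) [Category.{v} C] (Cfin : Set C) : Prop :=
  (∀ {X Y : C} (f : X ⟶ Y), Mono f) ∧
  (∀ A B : C, A ∈ Cfin → B ∈ Cfin → Finite (A ⟶ B)) ∧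
  (∀ F : C, ∃ A : C, A ∈ Cfin ∧ Nonempty (A ⟶ F)) ∧
  (∀ B : C, B ∈ Cfin → {A : C | A ∈ Cfin ∧ Nonempty (A ⟶ B)}.Finite)

def UniversalFor (C : Type u) [Category.{v} C] (F : C) (S : Set C) : Prop :=
  ∀ A ∈ S, Nonempty (A ⟶ F)

def LocallyFiniteFor (C : Type u) [Category.{v} C] (F : C) (S : Set C) : Prop :=
  ∀ (A B : C), A ∈ S → B ∈ S → ∀ (e : A ⟶ F) (f : B ⟶ F),
    ∃ D₀ : C, D₀ ∈ S ∧ ∃ (r : D₀ ⟶ F) (p : A ⟶ D₀) (q : B ⟶ D₀),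
      p ≫ r = e ∧ q ≫ r = f ∧
      ∀ (H : C) (r' : H ⟶ F) (p' : A ⟶ H) (q' : B ⟶ H),
        p' ≫ r' = e → q' ≫ r' = f →
        ∃ s : D₀ ⟶ H, s ≫ r' = r ∧ p ≫ s = p' ∧ q ≫ s = q'

def EssentialAt (C : Type u) [Category.{v} C] (F A B : C) {t : ℕ}
    (lam : (A ⟶ B) → Fin t) : Prop :=
  ∀ (k : ℕ) (χ : (A ⟶ F) → Fin k), ∃ w : B ⟶ F,
    ∀ f g : A ⟶ B, lam f = lam g → χ (f ≫ w) = χ (g ≫ w)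

theorem stmt5 {C : Type u} [Category.{v} C] (Cfin Afin : Set C)
    (hsat : SatisfiesC C Cfin) (hsub : Afin ⊆ Cfin)
    (F : C) (huniv : UniversalFor C F Afin) (hlf : LocallyFiniteFor C F Afin)
    (A : C) (hA : A ∈ Afin) (t : ℕ) (ht : 2 ≤ t) :
    (∀ k : ℕ, 2 ≤ k → ∀ B : C, B ∈ Afin → Nonempty (A ⟶ B) →
        RamseyArrow C A B F k t) ↔
    (∀ B : C, B ∈ Afin → Nonempty (A ⟶ B) →
        ∃ lam : (A ⟶ B) → Fin t, EssentialAt C F A B lam) := by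
  constructor
  · -- Ramsey ⇒ essential coloring exists
    intro h B hB hAB
    -- hom(A,B) is finite
    have hfin : Finite (A ⟶ B) := hsat.2.1 A B (hsub hA) (hsub hB)
    by_contra hcon
    push_neg at hcon
    unfold EssentialAt at hcon
    push_neg at hcon
    choose k χ hχ using hcon
    -- Build the product coloring
    haveI : Fintype ((A ⟶ B) → Fin t) := Fintype.ofFinite _
    set X := ∀ lam : (A ⟶ B) → Fin t, Fin (k lam) with hX
    haveI : Fintype X := Fintype.ofFinite _
    set N := Fintype.card X with hN
    obtain ⟨e⟩ : Nonempty (X ↪ Fin (max 2 N)) := by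
      refine Function.Embedding.nonempty_of_card_le ?_
      rw [Fintype.card_fin]
      exact le_max_of_le_right (le_of_eq (by rw [hN]))
    set χ' : (A ⟶ F) → Fin (max 2 N) :=
      fun hmor => e (fun lam => χ lam hmor) with hχ'
    obtain ⟨w, hw⟩ := h (max 2 N) (le_max_left 2 N) B hB hAB χ'
    -- Build λ₀ from the range of χ' ∘ (- ≫ w)
    set S : Set (Fin (max 2 N)) := Set.range fun f : A ⟶ B => χ' (f ≫ w) with hS
    have hSfin : S.Finite := Set.toFinite S
    haveI : Fintype S := hSfin.fintype
    obtain ⟨φ⟩ : Nonempty (S ↪ Fin t) := by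
      refine Function.Embedding.nonempty_of_card_le ?_
      have : Fintype.card S = S.ncard := by
        rw [Set.ncard_eq_toFinset_card']
        simp [Set.toFinset_card]
      simpa [this] using hw
    set lam1 : (A ⟶ B) → Fin t :=
      fun f => φ ⟨χ' (f ≫ w), ⟨f, rfl⟩⟩ with hlam1
    obtain ⟨f, g, hfg, hne⟩ := hχ lam1 w
    apply hne
    have : χ' (f ≫ w) = χ' (g ≫ w) :=
      congrArg Subtype.val (φ.injective hfg)
    have hxe : (fun lam => χ lam (f ≫ w)) = (fun lam => χ lam (g ≫ w)) :=
      e.injective this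
    exact congrFun hxe lam1
  · -- essential coloring ⇒ Ramsey
    intro h k hk B hB hAB χ
    classical
    obtain ⟨lam, hlam⟩ := h B hB hAB
    obtain ⟨w, hw⟩ := hlam k χ
    refine ⟨w, ?_⟩
    -- the range factors through Fin t
    have hk0 : 0 < k := by omega
    set ψ : Fin t → Fin k := fun i =>
      if hex : ∃ f : A ⟶ B, lam f = i then χ (Classical.choose hex ≫ w)
      else ⟨0, hk0⟩ with hψ
    have hsub' : (Set.range fun f : A ⟶ B => χ (f ≫ w)) ⊆ Set.range ψ := by
      rintro x ⟨f, rfl⟩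
      refine ⟨lam f, ?_⟩
      have hex : ∃ g : A ⟶ B, lam g = lam f := ⟨f, rfl⟩
      simp only [hψ, dif_pos hex]
      exact hw _ _ (Classical.choose_spec hex)
    calc (Set.range fun f : A ⟶ B => χ (f ≫ w)).ncard
        ≤ (Set.range ψ).ncard := Set.ncard_le_ncard hsub' (Set.toFinite _)
      _ ≤ t := by
          rw [Set.ncard_eq_toFinset_card', Set.toFinset_range]
          exact Finset.card_image_le.trans (by simp)
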